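/- For α ≥ 1 and 0 < y ≤ 1, one has (1 + αy/(α+1)) · (1 - y/(α+1))^α < 1. -/

import Mathlib

theorem stmt1 (α y : ℝ) (hα : 1 ≤ α) (hy0 : 0 < y) (hy1 : y ≤ 1) :
    (1 + α * y / (α + 1)) * (1 - y / (α + 1)) ^ α < 1 := by
  have hα0 : (0:ℝ) < α + 1 := by linarith
  set x : ℝ := y / (α + 1) with hxdef
  have hx0 : 0 < x := div_pos hy0 hα0
  have hx1 : x < 1 := by
    rw [hxdef, div_lt_one hα0]; linarith
  have h1x : 0 < 1 - x := by linarith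
  set z : ℝ := x / (1 - x) with hzdef
  have hz0 : 0 < z := div_pos hx0 h1x
  have hzx : x < z := by
    rw [hzdef, lt_div_iff₀ h1x]; nlinarith
  have hinv : (1 - x) = (1 + z)⁻¹ := by
    rw [hzdef]; field_simp; ring
  have h1z : (0:ℝ) < 1 + z := by linarith
  have hbern : 1 + α * z ≤ (1 + z) ^ α :=
    one_add_mul_self_le_rpow_one_add (by linarith) hα
  have hkey : 1 + α * x < (1 + z) ^ α := by
    have : α * x < α * z := by
      apply mul_lt_mul_of_pos_left hzx (by linarith)
    linarith
  have hmx : α * y / (α + 1) = α * x := by rw [hxdef]; ring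
  rw [hmx, hinv, Real.inv_rpow h1z.le,
    mul_inv_lt_iff₀ (Real.rpow_pos_of_pos h1z α), one_mul]
  exact hkey
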